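/- Let A = (a_{ij})_{i,j≥1} be an arbitrary infinite complex matrix, n ≥ 0, m ≥ 1, and let I = {i_1 < i_2 < … < i_m} ⊆ {1,…,m+n}. Then the polynomial P^I_A ∈ ℂ[x_0,…,x_n], defined as the determinant of the m×m matrix whose (r,c) entry is a_{r, i_c} − x_{i_c − r} when 0 ≤ i_c − r ≤ n and a_{r, i_c} otherwise, has total degree exactly m. -/
import Mathlib

open MvPolynomial Finset

/-- Strictly monotone maps on `Fin` grow at least linearly. -/
lemma PIA_aux_step {m n : ℕ} {i : Fin m → Fin (m + n)} (hi : StrictMono i) :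
    ∀ d : ℕ, ∀ a b : Fin m, (a : ℕ) + d = (b : ℕ) → (i a : ℕ) + d ≤ (i b : ℕ) := by
  intro d
  induction d with
  | zero =>
    intro a b h
    have : a = b := Fin.ext (by omega)
    simp [this]
  | succ d ih =>
    intro a b h
    have hb : (a : ℕ) + d < m := by have := b.isLt; omega
    have h1 := ih a ⟨(a : ℕ) + d, hb⟩ rfl
    have h2 : i ⟨(a : ℕ) + d, hb⟩ < i b := hi (by rw [Fin.lt_def]; simp; omega)
    rw [Fin.lt_def] at h2
    omega

lemma PIA_band_lemma {m n : ℕ} {i : Fin m → Fin (m + n)} (hi : StrictMono i) (c : Fin m) :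
    (c : ℕ) ≤ (i c : ℕ) ∧ (i c : ℕ) ≤ (c : ℕ) + n := by
  have hc := c.isLt
  constructor
  · have h := PIA_aux_step hi (c : ℕ) ⟨0, c.pos⟩ c (by simp)
    omega
  · have h := PIA_aux_step hi (m - 1 - (c : ℕ)) c ⟨m - 1, Nat.sub_lt c.pos Nat.one_pos⟩
      (by simp; omega)
    have := (i ⟨m - 1, Nat.sub_lt c.pos Nat.one_pos⟩).isLt
    omega

lemma PIA_prod_X_eq_monomial {ι τ : Type*} [DecidableEq τ] (s : Finset ι) (d : ι → τ) :
    (∏ c ∈ s, (X (d c) : MvPolynomial τ ℂ)) =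
      monomial (∑ c ∈ s, Finsupp.single (d c) 1) 1 := by
  classical
  induction s using Finset.cons_induction with
  | empty => simp
  | cons a s ha ih =>
    rw [Finset.prod_cons, Finset.sum_cons, ih, ← pow_one (X (d a) : MvPolynomial τ ℂ),
      X_pow_eq_monomial, monomial_mul, one_mul]

lemma PIA_coeff_prod_sub {ι τ : Type*} [Fintype ι] [DecidableEq τ]
    (a : ι → ℂ) (g : ι → MvPolynomial τ ℂ) (hg : ∀ c, (g c).totalDegree ≤ 1)
    (m0 : τ →₀ ℕ) (hm0 : (m0.sum fun _ e => e) = Fintype.card ι) :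
    coeff m0 (∏ c, (C (a c) - g c)) =
      (-1 : ℂ) ^ (Fintype.card ι) * coeff m0 (∏ c, g c) := by
  classical
  have : (∏ c, (C (a c) - g c)) =
      ∑ t ∈ (univ : Finset ι).powerset, (∏ c ∈ t, C (a c)) * ∏ c ∈ univ \ t, (-g c) := by
    rw [← Finset.prod_add]
    exact Finset.prod_congr rfl fun c _ => by ring
  rw [this, coeff_sum, Finset.sum_eq_single_of_mem (∅ : Finset ι)
    (Finset.empty_mem_powerset _)]
  · rw [Finset.prod_empty, one_mul, Finset.sdiff_empty]
    have : (∏ c : ι, (-g c)) = (-1 : MvPolynomial τ ℂ) ^ (Fintype.card ι) * ∏ c, g c := by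
      rw [← Finset.card_univ, ← Finset.prod_const]
      rw [← Finset.prod_mul_distrib]
      exact Finset.prod_congr rfl fun c _ => by ring
    rw [this, show ((-1 : MvPolynomial τ ℂ)) ^ (Fintype.card ι)
        = C ((-1 : ℂ) ^ (Fintype.card ι)) by rw [map_pow, map_neg, map_one],
      coeff_C_mul]
  · intro t ht hne
    apply coeff_eq_zero_of_totalDegree_lt
    have h1 : ((∏ c ∈ t, C (a c)) * ∏ c ∈ univ \ t, (-g c)).totalDegree
        ≤ Fintype.card ι - t.card := by
      refine (totalDegree_mul _ _).trans ?_
      have h2 : (∏ c ∈ t, (C (a c) : MvPolynomial τ ℂ)).totalDegree ≤ 0 := by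
        refine (totalDegree_finset_prod _ _).trans ?_
        simp [totalDegree_C]
      have h3 : (∏ c ∈ univ \ t, (-g c)).totalDegree ≤ (univ \ t).card := by
        refine (totalDegree_finset_prod _ _).trans ?_
        calc ∑ c ∈ univ \ t, (-g c).totalDegree ≤ ∑ _c ∈ univ \ t, 1 :=
              Finset.sum_le_sum fun c _ => by rw [totalDegree_neg]; exact hg c
          _ = (univ \ t).card := by simp
      have h4 : (univ \ t).card = Fintype.card ι - t.card := by
        rw [Finset.card_sdiff_of_subset (Finset.subset_univ t), Finset.card_univ]
      omega
    have h5 : 0 < t.card := Finset.card_pos.mpr (by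
      rcases Finset.eq_empty_or_nonempty t with h | h
      · exact absurd h hne
      · exact h)
    have h6 : t.card ≤ Fintype.card ι := by
      rw [← Finset.card_univ]; exact Finset.card_le_card (Finset.subset_univ t)
    have h7 : (∑ i ∈ m0.support, m0 i) = Fintype.card ι := hm0
    omega

lemma PIA_perm_eq_one_of_sq {m n : ℕ} {i : Fin m → Fin (m + n)} (hi : StrictMono i)
    (σ : Equiv.Perm (Fin m))
    (hband : ∀ c, (σ c : ℕ) ≤ (i c : ℕ))
    (hlow : ∀ c : Fin m, (c : ℕ) ≤ (i c : ℕ))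
    (hsum : ∑ c : Fin m, ((i c : ℕ) - (σ c : ℕ)) ^ 2
          = ∑ c : Fin m, ((i c : ℕ) - (c : ℕ)) ^ 2) :
    σ = 1 := by
  set u : Fin m → ℤ := fun c => ((i c : ℕ) : ℤ) with hu_def
  set v : Fin m → ℤ := fun c => ((c : ℕ) : ℤ) with hv_def
  have hu : StrictMono u := fun a b h => by
    have := hi h
    rw [Fin.lt_def] at this
    exact Int.ofNat_lt.mpr this
  have hcast : ∑ c : Fin m, (u c - v (σ c)) ^ 2 = ∑ c : Fin m, (u c - v c) ^ 2 := by
    calc ∑ c : Fin m, (u c - v (σ c)) ^ 2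
        = ∑ c : Fin m, ((((i c : ℕ) - (σ c : ℕ) : ℕ)) : ℤ) ^ 2 :=
          Finset.sum_congr rfl fun c _ => by
            rw [Nat.cast_sub (hband c)]
      _ = ∑ c : Fin m, ((((i c : ℕ) - (c : ℕ) : ℕ)) : ℤ) ^ 2 := by exact_mod_cast hsum
      _ = ∑ c : Fin m, (u c - v c) ^ 2 :=
          Finset.sum_congr rfl fun c _ => by rw [Nat.cast_sub (hlow c)]
  have hperm2 : ∑ c : Fin m, (v (σ c)) ^ 2 = ∑ c : Fin m, (v c) ^ 2 :=
    Equiv.sum_comp σ (fun c => (v c) ^ 2)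
  have hS : ∑ c : Fin m, u c * v (σ c) = ∑ c : Fin m, u c * v c := by
    have e1 : ∑ c : Fin m, (u c - v (σ c)) ^ 2
        = (∑ c : Fin m, (u c ^ 2 + (v (σ c)) ^ 2)) - 2 * ∑ c : Fin m, u c * v (σ c) := by
      rw [Finset.mul_sum, ← Finset.sum_sub_distrib]
      exact Finset.sum_congr rfl fun c _ => by ring
    have e2 : ∑ c : Fin m, (u c - v c) ^ 2
        = (∑ c : Fin m, (u c ^ 2 + (v c) ^ 2)) - 2 * ∑ c : Fin m, u c * v c := by
      rw [Finset.mul_sum, ← Finset.sum_sub_distrib]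
      exact Finset.sum_congr rfl fun c _ => by ring
    have e3 : ∑ c : Fin m, (u c ^ 2 + (v (σ c)) ^ 2)
        = ∑ c : Fin m, (u c ^ 2 + (v c) ^ 2) := by
      rw [Finset.sum_add_distrib, Finset.sum_add_distrib, hperm2]
    rw [e1, e2, e3] at hcast
    linarith
  have hmono : Monovary u v := fun a b h => by
    have hab : a < b := by
      rw [Fin.lt_def]
      exact Nat.cast_lt.mp h
    exact (hu hab).le
  have hgood : Monovary u (v ∘ σ) :=
    (hmono.sum_mul_comp_perm_eq_sum_mul_iff (σ := σ)).mp hS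
  have hsm : StrictMono σ := by
    intro a b hab
    rcases lt_trichotomy (σ a) (σ b) with h | h | h
    · exact h
    · exact absurd (σ.injective h) (ne_of_lt hab)
    · exfalso
      have hlt : (v ∘ σ) b < (v ∘ σ) a := by
        simp only [Function.comp, hv_def]
        exact_mod_cast (Fin.lt_def.mp h)
      have := hgood hlt
      exact absurd (hu hab) (not_lt.mpr this)
  haveI : WellFoundedLT (Fin m) := Finite.to_wellFoundedLT
  have : (σ : Fin m → Fin m) = id := by
    rw [← StrictMono.range_inj hsm strictMono_id]
    rw [σ.surjective.range_eq]
    simp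
  exact Equiv.ext fun c => congrFun this c

/-- The linear part of the matrix entries. -/
noncomputable def PIAGmat {m n : ℕ} (i : Fin m → Fin (m + n)) :
    Fin m → Fin m → MvPolynomial (Fin (n + 1)) ℂ := fun r c =>
  if h : (r : ℕ) ≤ (i c : ℕ) ∧ (i c : ℕ) ≤ (r : ℕ) + n then
    X (⟨(i c : ℕ) - (r : ℕ), by omega⟩ : Fin (n + 1))
  else 0

/-- Given an infinite complex matrix `A` (indices `0`-based), `n ≥ 0`, `m ≥ 1`, and a strictly
increasing sequence of column indices `i : Fin m → Fin (m+n)`, the polynomial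
`P^I_A ∈ ℂ[x_0,…,x_n]` is the determinant of the `m × m` matrix whose `(r,c)` entry is
`a_{r, i_c} - x_{i_c - r}` when `0 ≤ i_c - r ≤ n`, and `a_{r, i_c}` otherwise. -/
noncomputable def PIA (A : ℕ → ℕ → ℂ) (n m : ℕ) (i : Fin m → Fin (m + n)) :
    MvPolynomial (Fin (n + 1)) ℂ :=
  Matrix.det (Matrix.of fun r c : Fin m =>
    MvPolynomial.C (A (r : ℕ) ((i c : ℕ))) -
      if h : (r : ℕ) ≤ (i c : ℕ) ∧ (i c : ℕ) ≤ (r : ℕ) + n then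
        MvPolynomial.X (⟨(i c : ℕ) - (r : ℕ), by omega⟩ : Fin (n + 1))
      else 0)

theorem stmt1 (A : ℕ → ℕ → ℂ) (n m : ℕ) (hm : 1 ≤ m)
    (i : Fin m → Fin (m + n)) (hi : StrictMono i) :
    (PIA A n m i).totalDegree = m := by
  classical
  have hband := PIA_band_lemma hi
  have hG : ∀ r c : Fin m, (PIAGmat i r c).totalDegree ≤ 1 := by
    intro r c
    rw [PIAGmat]
    split
    · exact le_of_eq (totalDegree_X _)
    · simp
  have hPIA : PIA A n m i = Matrix.det (Matrix.of fun r c : Fin m =>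
      C (A (r : ℕ) ((i c : ℕ))) - PIAGmat i r c) := rfl
  -- the target monomial
  have hd : ∀ c : Fin m, (i c : ℕ) - (c : ℕ) < n + 1 := fun c => by have := hband c; omega
  set d : Fin m → Fin (n + 1) := fun c => ⟨(i c : ℕ) - (c : ℕ), hd c⟩ with hd_def
  set m0 : Fin (n + 1) →₀ ℕ := ∑ c : Fin m, Finsupp.single (d c) 1 with hm0_def
  have hm0sum : (m0.sum fun _ e => e) = m := by
    have h1 : (m0.sum fun _ e => e)
        = Finsupp.liftAddHom (fun _ : Fin (n + 1) => AddMonoidHom.id ℕ) m0 := rfl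
    rw [h1, hm0_def, map_sum]
    simp [Finsupp.liftAddHom_apply_single]
  -- the weight homomorphism
  set W : (Fin (n + 1) →₀ ℕ) →+ ℕ :=
    Finsupp.liftAddHom (fun s : Fin (n + 1) => AddMonoidHom.mulRight ((s : ℕ) ^ 2))
    with hW_def
  have hWsingle : ∀ (x : Fin (n + 1)) (k : ℕ), W (Finsupp.single x k) = k * (x : ℕ) ^ 2 :=
    fun x k => by rw [hW_def, Finsupp.liftAddHom_apply_single]; rfl
  -- coefficient of m0 in each permutation product
  have hkey : ∀ σ : Equiv.Perm (Fin m),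
      coeff m0 (∏ c : Fin m, (C (A ((σ c : ℕ)) ((i c : ℕ))) - PIAGmat i (σ c) c))
        = if σ = 1 then (-1 : ℂ) ^ m else 0 := by
    intro σ
    rw [PIA_coeff_prod_sub (fun c => A ((σ c : ℕ)) ((i c : ℕ))) (fun c => PIAGmat i (σ c) c)
      (fun c => hG (σ c) c) m0 (by rw [hm0sum, Fintype.card_fin])]
    rw [Fintype.card_fin]
    by_cases hall : ∀ c : Fin m, (σ c : ℕ) ≤ (i c : ℕ) ∧ (i c : ℕ) ≤ (σ c : ℕ) + n
    · -- all entries in the band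
      have hds : ∀ c : Fin m, (i c : ℕ) - (σ c : ℕ) < n + 1 := fun c => by
        have := hall c; omega
      have hprod : (∏ c : Fin m, PIAGmat i (σ c) c)
          = monomial (∑ c : Fin m, Finsupp.single
              (⟨(i c : ℕ) - (σ c : ℕ), hds c⟩ : Fin (n + 1)) 1) 1 := by
        rw [← PIA_prod_X_eq_monomial]
        exact Finset.prod_congr rfl fun c _ => by rw [PIAGmat, dif_pos (hall c)]
      rw [hprod, coeff_monomial]
      by_cases hσ : σ = 1
      · subst hσ
        have : (∑ c : Fin m, Finsupp.single
            (⟨(i c : ℕ) - ((1 : Equiv.Perm (Fin m)) c : ℕ), hds c⟩ : Fin (n + 1)) 1) = m0 := by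
          rw [hm0_def]
          exact Finset.sum_congr rfl fun c _ => rfl
        rw [if_pos this, if_pos rfl, mul_one]
      · have hne : (∑ c : Fin m, Finsupp.single
            (⟨(i c : ℕ) - ((σ c : ℕ)), hds c⟩ : Fin (n + 1)) 1) ≠ m0 := by
          intro hEq
          apply hσ
          apply PIA_perm_eq_one_of_sq hi σ (fun c => (hall c).1) (fun c => (hband c).1)
          have h2 := congrArg W hEq
          rw [hm0_def, map_sum, map_sum] at h2
          simpa [hWsingle] using h2
        rw [if_neg hne, if_neg hσ, mul_zero]
    · -- some entry is constant: the linear product vanishes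
      rw [not_forall] at hall
      obtain ⟨c, hc⟩ := hall
      have : (∏ c : Fin m, PIAGmat i (σ c) c) = 0 :=
        Finset.prod_eq_zero (Finset.mem_univ c) (by rw [PIAGmat, dif_neg hc])
      rw [this, if_neg (by
        intro hσ1
        subst hσ1
        exact hc (hband c)), coeff_zero, mul_zero]
  -- the coefficient of m0 in PIA is (-1)^m
  have hcoeff : coeff m0 (PIA A n m i) = (-1 : ℂ) ^ m := by
    rw [hPIA, Matrix.det_apply', coeff_sum]
    rw [Finset.sum_eq_single_of_mem (1 : Equiv.Perm (Fin m)) (Finset.mem_univ _)]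
    · rw [show (((Equiv.Perm.sign (1 : Equiv.Perm (Fin m)) : ℤ)) : MvPolynomial (Fin (n + 1)) ℂ)
          = C (((Equiv.Perm.sign (1 : Equiv.Perm (Fin m)) : ℤ) : ℂ))
          from (map_intCast (C : ℂ →+* MvPolynomial (Fin (n + 1)) ℂ) _).symm, coeff_C_mul]
      have := hkey 1
      simp only [Matrix.of_apply] at *
      rw [this]
      simp
    · intro σ _ hσ
      rw [show (((Equiv.Perm.sign σ : ℤ)) : MvPolynomial (Fin (n + 1)) ℂ)
          = C (((Equiv.Perm.sign σ : ℤ) : ℂ))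
          from (map_intCast (C : ℂ →+* MvPolynomial (Fin (n + 1)) ℂ) _).symm, coeff_C_mul]
      have := hkey σ
      simp only [Matrix.of_apply] at *
      rw [this, if_neg hσ, mul_zero]
  -- conclude
  apply le_antisymm
  · -- upper bound
    rw [hPIA, Matrix.det_apply']
    refine (totalDegree_finset_sum _ _).trans (Finset.sup_le fun σ _ => ?_)
    refine (totalDegree_mul _ _).trans ?_
    have h1 : (((Equiv.Perm.sign σ : ℤ)) : MvPolynomial (Fin (n + 1)) ℂ).totalDegree = 0 := by
      rw [show (((Equiv.Perm.sign σ : ℤ)) : MvPolynomial (Fin (n + 1)) ℂ)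
          = C (((Equiv.Perm.sign σ : ℤ) : ℂ))
          from (map_intCast (C : ℂ →+* MvPolynomial (Fin (n + 1)) ℂ) _).symm]
      exact totalDegree_C _
    rw [h1, zero_add]
    refine (totalDegree_finset_prod _ _).trans ?_
    have hb : ∀ c : Fin m, ((Matrix.of fun r c : Fin m =>
        C (A (r : ℕ) ((i c : ℕ))) - PIAGmat i r c) (σ c) c).totalDegree ≤ 1 := fun c => by
      rw [Matrix.of_apply]
      exact (totalDegree_sub _ _).trans
        (max_le (by simp [totalDegree_C]) (hG (σ c) c))
    refine le_trans (Finset.sum_le_sum (fun c _ => hb c)) ?_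
    simp
  · -- lower bound
    have hmem : m0 ∈ (PIA A n m i).support := by
      rw [mem_support_iff, hcoeff]
      intro h
      have := pow_eq_zero_iff (n := m) (by omega) |>.mp h
      norm_num at this
    have := le_totalDegree hmem
    rwa [hm0sum] at this
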